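/- Let (Hc(t))_{c ∈ C, t ∈ ℕ} be nonnegative random processes on a finite index set C, and suppose there exist constants K > 0, ε > 0, and V ≥ 0 and a bounded sequence of expected costs with Δ(t) + V·E[C^MDPP(t) | H(t)] ≤ K + V·E[C^S(t)] − ε·Σ_c H_c(t) for all t, where Δ(t) = E[L(H(t+1)) − L(H(t)) | H(t)] and L(H) = (1/2)Σ_c λ_c H_c² with λ_c > 0, E[L(H(0))] < ∞, and lim_{T→∞}(1/T)Σ_{t=0}^{T-1} E[C^S(t)] = C̄ < ∞, and C^MDPP(t) ≥ C^min for all t. Then limsup_{T→∞} (1/T)Σ_{t=0}^{T-1} Σ_c E[H_c(t)] ≤ (K + V(C̄ − C^min))/ε. -/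
import Mathlib


open Filter

/-- Lyapunov drift-plus-penalty telescoping bound on time-averaged expected
waiting times (Theorem 1(ii)).  `EL t` denotes E[L(H(t))], `EH t c` denotes
E[H_c(t)], and `ECm t`, `ECs t` denote the expected MDPP and S-only dispatch
costs at time t.  The drift hypothesis is the expectation of
Δ(t) + V·E[C^MDPP(t)|H(t)] ≤ K + V·E[C^S(t)] − ε·Σ_c H_c(t). -/
theorem mdpp_waiting_time_bound {C : Type*} [Fintype C]
    (K ε V Cbar Cmin : ℝ) (hK : 0 < K) (hε : 0 < ε) (hV : 0 ≤ V)
    (lam : C → ℝ) (hlam : ∀ c, 0 < lam c)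
    (EL : ℕ → ℝ) (EH : ℕ → C → ℝ) (ECm ECs : ℕ → ℝ)
    (hELnonneg : ∀ t, 0 ≤ EL t)
    (hEHnonneg : ∀ t c, 0 ≤ EH t c)
    (hdrift : ∀ t, EL (t + 1) - EL t + V * ECm t ≤
      K + V * ECs t - ε * ∑ c, EH t c)
    (hCs : Tendsto (fun T : ℕ => (T : ℝ)⁻¹ * ∑ t ∈ Finset.range T, ECs t)
      atTop (nhds Cbar))
    (hCmin : ∀ t, Cmin ≤ ECm t) :
    limsup (fun T : ℕ => (T : ℝ)⁻¹ * ∑ t ∈ Finset.range T, ∑ c, EH t c) atTop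
      ≤ (K + V * (Cbar - Cmin)) / ε := by
  set f : ℕ → ℝ := fun T => (T : ℝ)⁻¹ * ∑ t ∈ Finset.range T, ∑ c, EH t c with hf
  set g : ℕ → ℝ := fun T =>
    (K + V * ((T : ℝ)⁻¹ * ∑ t ∈ Finset.range T, ECs t) - V * Cmin
      + (T : ℝ)⁻¹ * EL 0) / ε with hg
  have hgtend : Tendsto g atTop (nhds ((K + V * (Cbar - Cmin)) / ε)) := by
    have h0 : Tendsto (fun T : ℕ => (T : ℝ)⁻¹) atTop (nhds 0) :=
      tendsto_inv_atTop_nhds_zero_nat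
    have : Tendsto (fun T : ℕ =>
        (K + V * ((T : ℝ)⁻¹ * ∑ t ∈ Finset.range T, ECs t) - V * Cmin
          + (T : ℝ)⁻¹ * EL 0) / ε) atTop
        (nhds ((K + V * Cbar - V * Cmin + 0 * EL 0) / ε)) := by
      exact (((tendsto_const_nhds.add (hCs.const_mul V)).sub
        tendsto_const_nhds).add (h0.mul_const (EL 0))).div_const ε
    have heq : (K + V * (Cbar - Cmin)) / ε = (K + V * Cbar - V * Cmin + 0 * EL 0) / ε := by
      ring
    rw [hg, heq]
    exact this
  have hle : ∀ᶠ T in atTop, f T ≤ g T := by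
    filter_upwards [eventually_ge_atTop 1] with T hT
    have hTpos : (0 : ℝ) < T := by exact_mod_cast hT
    -- telescoping sum of the drift inequality
    have hsum : EL T - EL 0 + V * ∑ t ∈ Finset.range T, ECm t
        + ε * ∑ t ∈ Finset.range T, ∑ c, EH t c
        ≤ K * T + V * ∑ t ∈ Finset.range T, ECs t := by
      have := Finset.sum_le_sum (fun t (_ : t ∈ Finset.range T) => hdrift t)
      have htel : ∑ t ∈ Finset.range T, (EL (t + 1) - EL t) = EL T - EL 0 :=
        Finset.sum_range_sub EL T
      simp only [Finset.sum_add_distrib, Finset.sum_sub_distrib, htel,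
        ← Finset.mul_sum, Finset.sum_const, Finset.card_range,
        nsmul_eq_mul] at this ⊢
      linarith [this]
    have hCmsum : (Cmin * T : ℝ) ≤ ∑ t ∈ Finset.range T, ECm t := by
      calc (Cmin * T : ℝ) = ∑ _t ∈ Finset.range T, Cmin := by
            simp [mul_comm]
        _ ≤ _ := Finset.sum_le_sum fun t _ => hCmin t
    have key : ε * ∑ t ∈ Finset.range T, ∑ c, EH t c
        ≤ K * T + V * ∑ t ∈ Finset.range T, ECs t - V * (Cmin * T) + EL 0 := by
      have h1 : V * (Cmin * T) ≤ V * ∑ t ∈ Finset.range T, ECm t :=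
        mul_le_mul_of_nonneg_left hCmsum hV
      have h2 := hELnonneg T
      linarith
    -- divide by T and ε
    rw [hf, hg]
    simp only []
    rw [le_div_iff₀ hε]
    have hinv : (0:ℝ) ≤ (T : ℝ)⁻¹ := inv_nonneg.mpr hTpos.le
    have hT1 : (T : ℝ)⁻¹ * (T : ℝ) = 1 := inv_mul_cancel₀ hTpos.ne'
    calc (T : ℝ)⁻¹ * (∑ t ∈ Finset.range T, ∑ c, EH t c) * ε
        = (T : ℝ)⁻¹ * (ε * ∑ t ∈ Finset.range T, ∑ c, EH t c) := by ring
      _ ≤ (T : ℝ)⁻¹ * (K * T + V * ∑ t ∈ Finset.range T, ECs t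
            - V * (Cmin * T) + EL 0) := mul_le_mul_of_nonneg_left key hinv
      _ = K * ((T : ℝ)⁻¹ * T) + V * ((T : ℝ)⁻¹ * ∑ t ∈ Finset.range T, ECs t)
            - V * Cmin * ((T : ℝ)⁻¹ * T) + (T : ℝ)⁻¹ * EL 0 := by ring
      _ = K + V * ((T : ℝ)⁻¹ * ∑ t ∈ Finset.range T, ECs t) - V * Cmin
            + (T : ℝ)⁻¹ * EL 0 := by rw [hT1]; ring
  have hbddf : IsCoboundedUnder (· ≤ ·) atTop f := by
    refine isCoboundedUnder_le_of_eventually_le atTop (x := 0) ?_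
    filter_upwards with T
    exact mul_nonneg (by positivity) (Finset.sum_nonneg fun t _ =>
      Finset.sum_nonneg fun c _ => hEHnonneg t c)
  have hbddg : IsBoundedUnder (· ≤ ·) atTop g := hgtend.isBoundedUnder_le
  calc limsup f atTop ≤ limsup g atTop := limsup_le_limsup hle hbddf hbddg
    _ = (K + V * (Cbar - Cmin)) / ε := hgtend.limsup_eq
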